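/- Let (e_n) be a normalised unconditional basis with the shift property (every normalised block sequence is equivalent to its shift). Then the shift property holds uniformly: there is a constant C such that for all normalised block sequences (x_n), (x_n) is C-equivalent to (x_{n+1}). -/

import Mathlib

open Filter Topology

noncomputable section

structure SchauderBasis' (X : Type*) [NormedAddCommGroup X] [NormedSpace ℝ X] where
  e : ℕ → X
  coord : ℕ → X →L[ℝ] ℝ
  biorth : ∀ n m, coord n (e m) = if n = m then 1 else 0
  expansion : ∀ x : X,
    Filter.Tendsto (fun N => ∑ n ∈ Finset.range N, coord n x • e n) Filter.atTop (nhds x)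
  normalised : ∀ n, ‖e n‖ = 1

section Defs

variable {X Y : Type*} [NormedAddCommGroup X] [NormedSpace ℝ X]
  [NormedAddCommGroup Y] [NormedSpace ℝ Y]

/-- Convergence of the series `∑ x n` (of partial sums). -/
def Converges (x : ℕ → X) : Prop :=
  ∃ s, Filter.Tendsto (fun N => ∑ n ∈ Finset.range N, x n) Filter.atTop (nhds s)

/-- Two sequences are equivalent if the same scalar series converge. -/
def SeqEquiv (x : ℕ → X) (y : ℕ → Y) : Prop :=
  ∀ a : ℕ → ℝ, Converges (fun n => a n • x n) ↔ Converges (fun n => a n • y n)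

/-- `C`-equivalence of two sequences. -/
def CEquiv (C : ℝ) (x : ℕ → X) (y : ℕ → Y) : Prop :=
  ∀ (a : ℕ → ℝ) (N : ℕ),
    C⁻¹ * ‖∑ n ∈ Finset.range N, a n • y n‖ ≤ ‖∑ n ∈ Finset.range N, a n • x n‖ ∧
    ‖∑ n ∈ Finset.range N, a n • x n‖ ≤ C * ‖∑ n ∈ Finset.range N, a n • y n‖

/-- A basic sequence: uniformly bounded partial-sum projections. -/
def IsBasicSeq (x : ℕ → X) : Prop :=
  ∃ K, 1 ≤ K ∧ ∀ (a : ℕ → ℝ) (m n : ℕ), m ≤ n →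
    ‖∑ i ∈ Finset.range m, a i • x i‖ ≤ K * ‖∑ i ∈ Finset.range n, a i • x i‖

/-- A sequence of signs. -/
def IsSigns (θ : ℕ → ℝ) : Prop := ∀ n, θ n = 1 ∨ θ n = -1

end Defs

namespace SchauderBasis'

variable {X : Type*} [NormedAddCommGroup X] [NormedSpace ℝ X] (b : SchauderBasis' X)

/-- Support of a vector with respect to the basis. -/
def supp (x : X) : Set ℕ := {n | b.coord n x ≠ 0}

/-- A normalised block sequence of the basis. -/
def IsBlockSeq (x : ℕ → X) : Prop :=
  (∀ n, ‖x n‖ = 1) ∧ (∀ n, (b.supp (x n)).Finite) ∧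
  ∀ n, ∀ i ∈ b.supp (x n), ∀ j ∈ b.supp (x (n+1)), i < j

/-- Unconditionality of the basis. -/
def Unconditional : Prop :=
  ∀ θ : ℕ → ℝ, IsSigns θ → SeqEquiv (fun n => θ n • b.e n) b.e

/-- 1-unconditionality (finite-sum form). -/
def OneUnconditional : Prop :=
  ∀ (θ a : ℕ → ℝ), IsSigns θ → ∀ N,
    ‖∑ n ∈ Finset.range N, (θ n * a n) • b.e n‖ ≤ ‖∑ n ∈ Finset.range N, a n • b.e n‖

/-- The shift property: every normalised block sequence is equivalent to its shift. -/
def ShiftProperty : Prop :=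
  ∀ x : ℕ → X, b.IsBlockSeq x → SeqEquiv x (fun n => x (n+1))

/-- The basis is shrinking. -/
def Shrinking : Prop :=
  ∀ f : X →L[ℝ] ℝ, Filter.Tendsto
    (fun n => sSup ((fun y => |f y|) ''
      {y | y ∈ Submodule.span ℝ (Set.range fun i => b.e (n + i)) ∧ ‖y‖ ≤ 1}))
    Filter.atTop (nhds 0)

/-- The basis is boundedly complete. -/
def BoundedlyComplete : Prop :=
  ∀ a : ℕ → ℝ, (∃ M, ∀ N, ‖∑ i ∈ Finset.range N, a i • b.e i‖ ≤ M) →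
    Converges (fun i => a i • b.e i)

-- ### Auxiliary machinery for the proof


/-- partial sum projections -/
def proj (N : ℕ) : X →L[ℝ] X :=
  ∑ n ∈ Finset.range N, (b.coord n).smulRight (b.e n)

lemma proj_apply (N : ℕ) (x : X) :
    b.proj N x = ∑ n ∈ Finset.range N, b.coord n x • b.e n := by
  simp [proj]

lemma exists_basis_const [CompleteSpace X] :
    ∃ K : ℝ, 1 ≤ K ∧ ∀ (N : ℕ) (x : X), ‖b.proj N x‖ ≤ K * ‖x‖ := by
  have hpt : ∀ x : X, ∃ C, ∀ N : ℕ, ‖b.proj N x‖ ≤ C := by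
    intro x
    obtain ⟨C, hC⟩ := ((b.expansion x).norm).bddAbove_range
    refine ⟨C, fun N => ?_⟩
    have hmem : ‖∑ n ∈ Finset.range N, b.coord n x • b.e n‖ ∈
        Set.range fun N => ‖∑ n ∈ Finset.range N, b.coord n x • b.e n‖ := ⟨N, rfl⟩
    simpa [proj_apply] using hC hmem
  obtain ⟨C', hC'⟩ := banach_steinhaus (g := fun N : ℕ => b.proj N) hpt
  refine ⟨max C' 1, le_max_right _ _, fun N x => ?_⟩
  refine le_trans ((b.proj N).le_opNorm x) ?_
  exact mul_le_mul_of_nonneg_right ((hC' N).trans (le_max_left _ _)) (norm_nonneg x)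

lemma eq_sum_of_supp_lt {v : X} {M : ℕ} (h : ∀ i ∈ b.supp v, i < M) :
    v = ∑ n ∈ Finset.range M, b.coord n v • b.e n := by
  have hconst : ∀ N, M ≤ N → ∑ n ∈ Finset.range N, b.coord n v • b.e n
      = ∑ n ∈ Finset.range M, b.coord n v • b.e n := by
    intro N hN
    rw [← Finset.sum_range_add_sum_Ico _ hN, add_eq_left]
    refine Finset.sum_eq_zero fun n hn => ?_
    rw [Finset.mem_Ico] at hn
    have : n ∉ b.supp v := fun hs => absurd (h n hs) (by omega)
    simp only [supp, Set.mem_setOf_eq, not_not] at this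
    simp [this]
  have h2 : Tendsto (fun N => ∑ n ∈ Finset.range N, b.coord n v • b.e n) atTop
      (nhds (∑ n ∈ Finset.range M, b.coord n v • b.e n)) := by
    refine Tendsto.congr' ?_ tendsto_const_nhds
    filter_upwards [eventually_ge_atTop M] with N hN
    exact (hconst N hN).symm
  exact (tendsto_nhds_unique (b.expansion v) h2)

lemma proj_eq_self {v : X} {M : ℕ} (h : ∀ i ∈ b.supp v, i < M) : b.proj M v = v := by
  rw [proj_apply]
  exact (b.eq_sum_of_supp_lt h).symm

lemma proj_eq_zero {v : X} {M : ℕ} (h : ∀ i ∈ b.supp v, M ≤ i) : b.proj M v = 0 := by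
  rw [proj_apply]
  refine Finset.sum_eq_zero fun n hn => ?_
  rw [Finset.mem_range] at hn
  have : n ∉ b.supp v := fun hs => absurd (h n hs) (by omega)
  simp only [supp, Set.mem_setOf_eq, not_not] at this
  simp [this]

lemma supp_nonempty {v : X} (hv : v ≠ 0) : (b.supp v).Nonempty := by
  by_contra h
  rw [Set.not_nonempty_iff_eq_empty] at h
  apply hv
  have h2 : Tendsto (fun N => ∑ n ∈ Finset.range N, b.coord n v • b.e n) atTop (nhds 0) := by
    have : ∀ N, ∑ n ∈ Finset.range N, b.coord n v • b.e n = 0 := by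
      intro N
      refine Finset.sum_eq_zero fun n _ => ?_
      have : n ∉ b.supp v := by rw [h]; exact Set.notMem_empty n
      simp only [supp, Set.mem_setOf_eq, not_not] at this
      simp [this]
    simpa [this] using tendsto_const_nhds
  exact tendsto_nhds_unique (b.expansion v) h2

lemma block_ne_zero {x : ℕ → X} (hx : b.IsBlockSeq x) (n : ℕ) : x n ≠ 0 := by
  intro h
  have := hx.1 n
  rw [h, norm_zero] at this
  norm_num at this

lemma block_supp_nonempty {x : ℕ → X} (hx : b.IsBlockSeq x) (n : ℕ) :
    (b.supp (x n)).Nonempty := b.supp_nonempty (b.block_ne_zero hx n)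

lemma block_supp_lt {x : ℕ → X} (hx : b.IsBlockSeq x) {m n : ℕ} (hmn : m < n)
    {i j : ℕ} (hi : i ∈ b.supp (x m)) (hj : j ∈ b.supp (x n)) : i < j := by
  obtain ⟨d, rfl⟩ : ∃ d, n = m + d + 1 := ⟨n - m - 1, by omega⟩
  clear hmn
  induction d generalizing j with
  | zero => exact hx.2.2 m i hi j hj
  | succ d ih =>
    obtain ⟨c, hc⟩ := b.block_supp_nonempty hx (m + d + 1)
    exact lt_trans (ih hc) (hx.2.2 (m + d + 1) c hc j hj)

lemma block_le_supp {x : ℕ → X} (hx : b.IsBlockSeq x) {n : ℕ}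
    {j : ℕ} (hj : j ∈ b.supp (x n)) : n ≤ j := by
  induction n generalizing j with
  | zero => omega
  | succ n ih =>
    obtain ⟨c, hc⟩ := b.block_supp_nonempty hx n
    have := b.block_supp_lt hx (Nat.lt_succ_self n) hc hj
    have := ih hc
    omega

lemma block_basic {K : ℝ}
    (hKb : ∀ (N : ℕ) (v : X), ‖b.proj N v‖ ≤ K * ‖v‖)
    {x : ℕ → X} (hx : b.IsBlockSeq x) (a : ℕ → ℝ) {m n : ℕ} (hmn : m ≤ n) :
    ‖∑ i ∈ Finset.range m, a i • x i‖ ≤ K * ‖∑ i ∈ Finset.range n, a i • x i‖ := by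
  rcases Nat.eq_zero_or_pos m with hm | hm
  · subst hm
    simp only [Finset.range_zero, Finset.sum_empty, norm_zero]
    have h0 := hKb 0 (∑ i ∈ Finset.range n, a i • x i)
    have : ‖b.proj 0 (∑ i ∈ Finset.range n, a i • x i)‖ = 0 := by
      simp [proj_apply]
    linarith
  · obtain ⟨m', rfl⟩ : ∃ m', m = m' + 1 := ⟨m - 1, by omega⟩
    set s := (hx.2.1 m').toFinset with hs
    have hsne : s.Nonempty := by
      rw [hs, Set.Finite.toFinset_nonempty]
      exact b.block_supp_nonempty hx m'
    set M := s.max' hsne + 1 with hM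
    have hproj : b.proj M (∑ i ∈ Finset.range n, a i • x i)
        = ∑ i ∈ Finset.range (m' + 1), a i • x i := by
      rw [map_sum]
      rw [← Finset.sum_range_add_sum_Ico (fun i => b.proj M (a i • x i)) hmn]
      have h1 : ∀ i ∈ Finset.range (m' + 1), b.proj M (a i • x i) = a i • x i := by
        intro i hi
        rw [Finset.mem_range] at hi
        rw [map_smul]
        congr 1
        refine b.proj_eq_self fun j hj => ?_
        have hjle : j ≤ s.max' hsne := by
          rcases Nat.lt_succ_iff_lt_or_eq.mp hi with h | h
          · obtain ⟨c, hc⟩ := b.block_supp_nonempty hx m'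
            have h2 := b.block_supp_lt hx h hj hc
            have h3 : c ∈ s := (hx.2.1 m').mem_toFinset.mpr hc
            have := Finset.le_max' s c h3
            omega
          · rw [h] at hj
            exact Finset.le_max' s j ((hx.2.1 m').mem_toFinset.mpr hj)
        omega
      have h2 : ∀ i ∈ Finset.Ico (m' + 1) n, b.proj M (a i • x i) = 0 := by
        intro i hi
        rw [Finset.mem_Ico] at hi
        rw [map_smul]
        have : b.proj M (x i) = 0 := by
          refine b.proj_eq_zero fun j hj => ?_
          have hmem' : s.max' hsne ∈ b.supp (x m') :=
            (hx.2.1 m').mem_toFinset.mp (Finset.max'_mem s hsne)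
          have h2 := b.block_supp_lt hx (by omega : m' < i) hmem' hj
          omega
        rw [this, smul_zero]
      rw [Finset.sum_congr rfl h1, Finset.sum_congr rfl h2]
      simp
    calc ‖∑ i ∈ Finset.range (m' + 1), a i • x i‖
        = ‖b.proj M (∑ i ∈ Finset.range n, a i • x i)‖ := by rw [hproj]
      _ ≤ K * ‖∑ i ∈ Finset.range n, a i • x i‖ := hKb M _

lemma block_coord {K : ℝ}
    (hKb : ∀ (N : ℕ) (v : X), ‖b.proj N v‖ ≤ K * ‖v‖)
    {x : ℕ → X} (hx : b.IsBlockSeq x) (a : ℕ → ℝ) {j N : ℕ} (hj : j < N) :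
    |a j| ≤ 2 * K * ‖∑ i ∈ Finset.range N, a i • x i‖ := by
  have h1 : ‖∑ i ∈ Finset.range (j+1), a i • x i‖ ≤ K * ‖∑ i ∈ Finset.range N, a i • x i‖ :=
    b.block_basic hKb hx a (by omega)
  have h2 : ‖∑ i ∈ Finset.range j, a i • x i‖ ≤ K * ‖∑ i ∈ Finset.range N, a i • x i‖ :=
    b.block_basic hKb hx a (by omega)
  have h3 : a j • x j = ∑ i ∈ Finset.range (j+1), a i • x i - ∑ i ∈ Finset.range j, a i • x i := by
    rw [Finset.sum_range_succ]; abel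
  have h4 : ‖a j • x j‖ = |a j| := by
    rw [norm_smul, hx.1 j, mul_one, Real.norm_eq_abs]
  rw [← h4, h3]
  calc ‖_ - _‖ ≤ ‖∑ i ∈ Finset.range (j+1), a i • x i‖ + ‖∑ i ∈ Finset.range j, a i • x i‖ :=
        norm_sub_le _ _
    _ ≤ 2 * K * ‖∑ i ∈ Finset.range N, a i • x i‖ := by linarith

lemma IsBlockSeq.shift {x : ℕ → X} (hx : b.IsBlockSeq x) :
    b.IsBlockSeq (fun n => x (n+1)) :=
  ⟨fun n => hx.1 (n+1), fun n => hx.2.1 (n+1), fun n => hx.2.2 (n+1)⟩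

lemma IsBlockSeq.tail {x : ℕ → X} (hx : b.IsBlockSeq x) (m : ℕ) :
    b.IsBlockSeq (fun n => x (m+n)) :=
  ⟨fun n => hx.1 (m+n), fun n => hx.2.1 (m+n), fun n => by
    have := hx.2.2 (m+n)
    simpa [Nat.add_assoc] using this⟩


end SchauderBasis'

section AuxAbstract

variable {X : Type*} [NormedAddCommGroup X] [NormedSpace ℝ X]

lemma cauchy_of_window_bounds {c : ℕ → X} {p : ℕ → ℕ} (hp : StrictMono p) (hp0 : p 0 = 0)
    {K : ℝ} (hK : 0 ≤ K)
    (hseg : ∀ k N, p k ≤ N → N ≤ p (k+1) →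
      ‖∑ n ∈ Finset.Ico (p k) N, c n‖ ≤ K * (2⁻¹ : ℝ)^k) :
    CauchySeq (fun N => ∑ n ∈ Finset.range N, c n) := by
  have claim : ∀ (j k N : ℕ), p k ≤ N → N ≤ p (k+j) →
      ‖∑ n ∈ Finset.Ico (p k) N, c n‖ ≤ 2*K*(2⁻¹ : ℝ)^k := by
    intro j
    induction j with
    | zero =>
      intro k N h1 h2
      have hN : N = p k := le_antisymm h2 h1
      subst hN
      simp only [Finset.Ico_self, Finset.sum_empty, norm_zero]
      positivity
    | succ j ih =>
      intro k N h1 h2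
      by_cases hN : N ≤ p (k+1)
      · have h := hseg k N h1 hN
        have hpow : (0:ℝ) ≤ (2⁻¹:ℝ)^k := by positivity
        nlinarith
      · push_neg at hN
        have h3 : p (k+1) ≤ N := hN.le
        rw [← Finset.sum_Ico_consecutive c (hp.monotone (Nat.le_succ k)) h3]
        have hA := hseg k (p (k+1)) (hp.monotone (Nat.le_succ k)) le_rfl
        have h2' : N ≤ p (k+1+j) := by
          rw [show k+1+j = k + (j+1) from by omega]; exact h2
        have hB := ih (k+1) N h3 h2'
        calc ‖∑ n ∈ Finset.Ico (p k) (p (k+1)), c n + ∑ n ∈ Finset.Ico (p (k+1)) N, c n‖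
            ≤ ‖∑ n ∈ Finset.Ico (p k) (p (k+1)), c n‖ + ‖∑ n ∈ Finset.Ico (p (k+1)) N, c n‖ :=
              norm_add_le _ _
          _ ≤ K*(2⁻¹:ℝ)^k + 2*K*(2⁻¹:ℝ)^(k+1) := add_le_add hA hB
          _ = 2*K*(2⁻¹:ℝ)^k := by rw [pow_succ]; ring
  rw [Metric.cauchySeq_iff']
  intro ε hε
  have h0 : Filter.Tendsto (fun k => 2*K*(2⁻¹:ℝ)^k) Filter.atTop (nhds 0) := by
    simpa using (tendsto_pow_atTop_nhds_zero_of_lt_one (by norm_num : (0:ℝ) ≤ 2⁻¹)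
      (by norm_num)).const_mul (2*K)
  obtain ⟨k, hk⟩ := (h0.eventually (gt_mem_nhds hε)).exists
  refine ⟨p k, fun n hn => ?_⟩
  have hd : dist (∑ i ∈ Finset.range n, c i) (∑ i ∈ Finset.range (p k), c i)
      = ‖∑ i ∈ Finset.Ico (p k) n, c i‖ := by
    rw [dist_eq_norm, Finset.sum_Ico_eq_sub c hn]
  rw [hd]
  have hj : n ≤ p (k + n) := le_trans (by omega : n ≤ k + n) hp.le_apply
  exact lt_of_le_of_lt (claim n k n hn hj) hk

lemma not_converges_of_big_segments {c : ℕ → X}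
    (h : ∀ K : ℕ, ∃ m n, K ≤ m ∧ m ≤ n ∧ 1 ≤ ‖∑ i ∈ Finset.Ico m n, c i‖) :
    ¬ Converges c := by
  rintro ⟨s, hs⟩
  have hc := hs.cauchySeq
  rw [Metric.cauchySeq_iff] at hc
  obtain ⟨T, hT⟩ := hc 1 one_pos
  obtain ⟨m, n, h1, h2, h3⟩ := h T
  have hd := hT n (by omega) m (by omega)
  rw [dist_eq_norm, ← Finset.sum_Ico_eq_sub c h2] at hd
  linarith

end AuxAbstract

theorem shift_property_uniform
    {X : Type*} [NormedAddCommGroup X] [NormedSpace ℝ X] [CompleteSpace X]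
    (b : SchauderBasis' X) (hu : b.Unconditional) (hshift : b.ShiftProperty) :
    ∃ C : ℝ, 1 ≤ C ∧ ∀ x : ℕ → X, b.IsBlockSeq x → CEquiv C x (fun n => x (n+1)) := by
  classical
  obtain ⟨K, hK1, hKb⟩ := b.exists_basis_const
  by_cases hU : ∃ C : ℝ, 1 ≤ C ∧ ∃ M : ℕ, ∀ x : ℕ → X, b.IsBlockSeq x →
      (∀ i ∈ b.supp (x 0), M < i) → ∀ (a : ℕ → ℝ) (N : ℕ),
      ‖∑ n ∈ Finset.range N, a n • x n‖ ≤ C * ‖∑ n ∈ Finset.range N, a n • x (n+1)‖ ∧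
      ‖∑ n ∈ Finset.range N, a n • x (n+1)‖ ≤ C * ‖∑ n ∈ Finset.range N, a n • x n‖
  · obtain ⟨C, hCone, M, hCM⟩ := hU
    have hC'1 : (1:ℝ) ≤ 2*K*(M+1) + C*(1+K) := by nlinarith [Nat.cast_nonneg (α := ℝ) M]
    have hC'pos : (0:ℝ) < 2*K*(M+1) + C*(1+K) := by linarith
    have key : ∀ (x : ℕ → X), b.IsBlockSeq x → ∀ (a : ℕ → ℝ) (N : ℕ),
        ‖∑ n ∈ Finset.range N, a n • x n‖
          ≤ (2*K*(M+1) + C*(1+K)) * ‖∑ n ∈ Finset.range N, a n • x (n+1)‖ ∧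
        ‖∑ n ∈ Finset.range N, a n • x (n+1)‖
          ≤ (2*K*(M+1) + C*(1+K)) * ‖∑ n ∈ Finset.range N, a n • x n‖ := by
      intro x hx a N
      have hS0 : (0:ℝ) ≤ ‖∑ n ∈ Finset.range N, a n • x n‖ := norm_nonneg _
      have hS'0 : (0:ℝ) ≤ ‖∑ n ∈ Finset.range N, a n • x (n+1)‖ := norm_nonneg _
      have hcoord : ∀ n, n < N → |a n| ≤ 2*K*‖∑ i ∈ Finset.range N, a i • x i‖ :=
        fun n hn => b.block_coord hKb hx a hn
      have hcoord' : ∀ n, n < N → |a n| ≤ 2*K*‖∑ i ∈ Finset.range N, a i • x (i+1)‖ :=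
        fun n hn => b.block_coord hKb (hx.shift b) a hn
      have habs : ∀ (L : ℕ) (y : ℕ → X), (∀ i, ‖y i‖ = 1) → L ≤ N →
          (∀ n, n < N → |a n| ≤ 2*K*‖∑ i ∈ Finset.range N, a i • x i‖) →
          ‖∑ n ∈ Finset.range L, a n • y n‖ ≤ L * (2*K*‖∑ i ∈ Finset.range N, a i • x i‖) := by
        intro L y hy hL hc
        refine le_trans (norm_sum_le _ _) ?_
        have h1 : ∀ n ∈ Finset.range L, ‖a n • y n‖ ≤ 2*K*‖∑ i ∈ Finset.range N, a i • x i‖ := by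
          intro n hn
          rw [Finset.mem_range] at hn
          rw [norm_smul, hy n, mul_one, Real.norm_eq_abs]
          exact hc n (by omega)
        refine le_trans (Finset.sum_le_sum h1) ?_
        rw [Finset.sum_const, Finset.card_range, nsmul_eq_mul]
      have habs' : ∀ (L : ℕ) (y : ℕ → X), (∀ i, ‖y i‖ = 1) → L ≤ N →
          (∀ n, n < N → |a n| ≤ 2*K*‖∑ i ∈ Finset.range N, a i • x (i+1)‖) →
          ‖∑ n ∈ Finset.range L, a n • y n‖
            ≤ L * (2*K*‖∑ i ∈ Finset.range N, a i • x (i+1)‖) := by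
        intro L y hy hL hc
        refine le_trans (norm_sum_le _ _) ?_
        have h1 : ∀ n ∈ Finset.range L, ‖a n • y n‖
            ≤ 2*K*‖∑ i ∈ Finset.range N, a i • x (i+1)‖ := by
          intro n hn
          rw [Finset.mem_range] at hn
          rw [norm_smul, hy n, mul_one, Real.norm_eq_abs]
          exact hc n (by omega)
        refine le_trans (Finset.sum_le_sum h1) ?_
        rw [Finset.sum_const, Finset.card_range, nsmul_eq_mul]
      rcases le_or_gt N (M+1) with hNm | hNm
      · -- short sums : use coordinates only
        have h1 : ‖∑ n ∈ Finset.range N, a n • x (n+1)‖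
            ≤ N * (2*K*‖∑ i ∈ Finset.range N, a i • x i‖) :=
          habs N (fun n => x (n+1)) (fun n => hx.1 (n+1)) le_rfl hcoord
        have h2 : ‖∑ n ∈ Finset.range N, a n • x n‖
            ≤ N * (2*K*‖∑ i ∈ Finset.range N, a i • x (i+1)‖) :=
          habs' N x (fun n => hx.1 n) le_rfl hcoord'
        have hNM : (N:ℝ) ≤ (M:ℝ)+1 := by exact_mod_cast hNm
        have hKS : (0:ℝ) ≤ 2*K*‖∑ i ∈ Finset.range N, a i • x i‖ := by positivity
        have hKS' : (0:ℝ) ≤ 2*K*‖∑ i ∈ Finset.range N, a i • x (i+1)‖ := by positivity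
        constructor
        · nlinarith
        · nlinarith
      · -- long sums : split at m = M+1
        set m := M + 1 with hm
        have hmN : m ≤ N := by omega
        -- tail estimates from the hypothesis hCM
        have htail := hCM (fun j => x (m + j)) (hx.tail b m)
          (fun i hi => by
            have := b.block_le_supp hx (n := m) hi
            omega)
          (fun j => a (m + j)) (N - m)
        have hT1 : ‖∑ j ∈ Finset.range (N-m), a (m+j) • x (m+j)‖
            ≤ C * ‖∑ j ∈ Finset.range (N-m), a (m+j) • x (m+j+1)‖ := htail.1
        have hT2 : ‖∑ j ∈ Finset.range (N-m), a (m+j) • x (m+j+1)‖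
            ≤ C * ‖∑ j ∈ Finset.range (N-m), a (m+j) • x (m+j)‖ := htail.2
        -- head estimates
        have hH : ‖∑ n ∈ Finset.range m, a n • x n‖ ≤ K * ‖∑ i ∈ Finset.range N, a i • x i‖ :=
          b.block_basic hKb hx a hmN
        have hH' : ‖∑ n ∈ Finset.range m, a n • x (n+1)‖
            ≤ K * ‖∑ i ∈ Finset.range N, a i • x (i+1)‖ :=
          b.block_basic hKb (hx.shift b) a hmN
        have hHa' : ‖∑ n ∈ Finset.range m, a n • x (n+1)‖
            ≤ m * (2*K*‖∑ i ∈ Finset.range N, a i • x i‖) :=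
          habs m (fun n => x (n+1)) (fun n => hx.1 (n+1)) hmN hcoord
        have hHa : ‖∑ n ∈ Finset.range m, a n • x n‖
            ≤ m * (2*K*‖∑ i ∈ Finset.range N, a i • x (i+1)‖) :=
          habs' m x (fun n => hx.1 n) hmN hcoord'
        -- decompositions
        have hsplit : ∑ n ∈ Finset.range m, a n • x n
            + ∑ j ∈ Finset.range (N-m), a (m+j) • x (m+j) = ∑ n ∈ Finset.range N, a n • x n := by
          rw [← Finset.sum_Ico_eq_sum_range (fun n => a n • x n) m N]
          exact Finset.sum_range_add_sum_Ico _ hmN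
        have hsplit' : ∑ n ∈ Finset.range m, a n • x (n+1)
            + ∑ j ∈ Finset.range (N-m), a (m+j) • x (m+j+1)
            = ∑ n ∈ Finset.range N, a n • x (n+1) := by
          rw [← Finset.sum_Ico_eq_sum_range (fun n => a n • x (n+1)) m N]
          exact Finset.sum_range_add_sum_Ico _ hmN
        -- tail norms bounded via head and total
        have hTle : ‖∑ j ∈ Finset.range (N-m), a (m+j) • x (m+j)‖
            ≤ (1+K) * ‖∑ i ∈ Finset.range N, a i • x i‖ := by
          have : ∑ j ∈ Finset.range (N-m), a (m+j) • x (m+j)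
              = ∑ n ∈ Finset.range N, a n • x n - ∑ n ∈ Finset.range m, a n • x n := by
            rw [← hsplit]; abel
          rw [this]
          refine le_trans (norm_sub_le _ _) ?_
          linarith
        have hT'le : ‖∑ j ∈ Finset.range (N-m), a (m+j) • x (m+j+1)‖
            ≤ (1+K) * ‖∑ i ∈ Finset.range N, a i • x (i+1)‖ := by
          have : ∑ j ∈ Finset.range (N-m), a (m+j) • x (m+j+1)
              = ∑ n ∈ Finset.range N, a n • x (n+1) - ∑ n ∈ Finset.range m, a n • x (n+1) := by
            rw [← hsplit']; abel
          rw [this]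
          refine le_trans (norm_sub_le _ _) ?_
          linarith
        have hCpos : (0:ℝ) < C := by linarith
        have hmr : (m:ℝ) = (M:ℝ)+1 := by rw [hm]; push_cast; ring
        constructor
        · -- ‖S‖ ≤ C' ‖S'‖
          calc ‖∑ n ∈ Finset.range N, a n • x n‖
              = ‖∑ n ∈ Finset.range m, a n • x n
                + ∑ j ∈ Finset.range (N-m), a (m+j) • x (m+j)‖ := by rw [hsplit]
            _ ≤ ‖∑ n ∈ Finset.range m, a n • x n‖
                + ‖∑ j ∈ Finset.range (N-m), a (m+j) • x (m+j)‖ := norm_add_le _ _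
            _ ≤ (2*K*(M+1) + C*(1+K)) * ‖∑ n ∈ Finset.range N, a n • x (n+1)‖ := by
                have h5 : C * ‖∑ j ∈ Finset.range (N-m), a (m+j) • x (m+j+1)‖
                    ≤ C * ((1+K) * ‖∑ i ∈ Finset.range N, a i • x (i+1)‖) :=
                  mul_le_mul_of_nonneg_left hT'le hCpos.le
                have h6 := hT1
                rw [hmr] at hHa
                nlinarith
        · -- ‖S'‖ ≤ C' ‖S‖
          calc ‖∑ n ∈ Finset.range N, a n • x (n+1)‖
              = ‖∑ n ∈ Finset.range m, a n • x (n+1)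
                + ∑ j ∈ Finset.range (N-m), a (m+j) • x (m+j+1)‖ := by rw [hsplit']
            _ ≤ ‖∑ n ∈ Finset.range m, a n • x (n+1)‖
                + ‖∑ j ∈ Finset.range (N-m), a (m+j) • x (m+j+1)‖ := norm_add_le _ _
            _ ≤ (2*K*(M+1) + C*(1+K)) * ‖∑ n ∈ Finset.range N, a n • x n‖ := by
                have h5 : C * ‖∑ j ∈ Finset.range (N-m), a (m+j) • x (m+j)‖
                    ≤ C * ((1+K) * ‖∑ i ∈ Finset.range N, a i • x i‖) :=
                  mul_le_mul_of_nonneg_left hTle hCpos.le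
                have h6 := hT2
                rw [hmr] at hHa'
                nlinarith
    refine ⟨2*K*(M+1) + C*(1+K), hC'1, fun x hx a N => ?_⟩
    obtain ⟨k1, k2⟩ := key x hx a N
    constructor
    · rw [inv_mul_le_iff₀ hC'pos]
      exact k2
    · exact k1
  · -- no uniform constant even far out : build a contradiction with the shift property
    exfalso
    have key : ∀ k M : ℕ, ∃ x : ℕ → X, ∃ a : ℕ → ℝ, ∃ N : ℕ, b.IsBlockSeq x ∧
        (∀ i ∈ b.supp (x 0), M < i) ∧
        ((2:ℝ)^k * ‖∑ n ∈ Finset.range N, a n • x (n+1)‖ < ‖∑ n ∈ Finset.range N, a n • x n‖ ∨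
         (2:ℝ)^k * ‖∑ n ∈ Finset.range N, a n • x n‖ < ‖∑ n ∈ Finset.range N, a n • x (n+1)‖) := by
      intro k M
      by_contra hcon
      push_neg at hcon
      exact hU ⟨(2:ℝ)^k, one_le_pow₀ one_le_two, M, fun x hx hb a N => hcon x a N hx hb⟩
    choose xf af Nf hbl hbey hrat using key
    have hbdd : ∀ k M : ℕ, ∃ B : ℕ, ∀ n, n ≤ Nf k M → ∀ i ∈ b.supp (xf k M n), i ≤ B := by
      intro k M
      refine ⟨(Finset.range (Nf k M + 1)).sup (fun n => ((hbl k M).2.1 n).toFinset.sup id), ?_⟩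
      intro n hn i hi
      have h1 : i ≤ ((hbl k M).2.1 n).toFinset.sup id :=
        Finset.le_sup (f := id) (((hbl k M).2.1 n).mem_toFinset.mpr hi)
      exact h1.trans (Finset.le_sup (f := fun n => ((hbl k M).2.1 n).toFinset.sup id)
        (Finset.mem_range.mpr (show n < Nf k M + 1 by omega)))
    choose Bf hBf using hbdd
    obtain ⟨Ms, hMs0, hMsS⟩ : ∃ Ms : ℕ → ℕ, Ms 0 = 0 ∧ ∀ k, Ms (k+1) = Bf k (Ms k) :=
      ⟨fun k => Nat.rec 0 (fun k M => Bf k M) k, rfl, fun k => rfl⟩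
    obtain ⟨xx, hxxdef⟩ : ∃ xx : ℕ → ℕ → X, ∀ k, xx k = xf k (Ms k) := ⟨_, fun k => rfl⟩
    obtain ⟨aa, haadef⟩ : ∃ aa : ℕ → ℕ → ℝ, ∀ k, aa k = af k (Ms k) := ⟨_, fun k => rfl⟩
    obtain ⟨NN, hNNdef⟩ : ∃ NN : ℕ → ℕ, ∀ k, NN k = Nf k (Ms k) := ⟨_, fun k => rfl⟩
    have hblk : ∀ k, b.IsBlockSeq (xx k) := fun k => by rw [hxxdef]; exact hbl k (Ms k)
    have hbeyk : ∀ k, ∀ i ∈ b.supp (xx k 0), Ms k < i := fun k => by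
      rw [hxxdef]; exact hbey k (Ms k)
    have hBfk : ∀ k, ∀ n, n ≤ NN k → ∀ i ∈ b.supp (xx k n), i ≤ Bf k (Ms k) := by
      intro k n hn i hi
      rw [hxxdef] at hi
      exact hBf k (Ms k) n (by rw [hNNdef] at hn; exact hn) i hi
    obtain ⟨u, hudef⟩ : ∃ u : ℕ → X, ∀ k, u k = ∑ j ∈ Finset.range (NN k), aa k j • xx k j :=
      ⟨_, fun k => rfl⟩
    obtain ⟨v, hvdef⟩ : ∃ v : ℕ → X,
        ∀ k, v k = ∑ j ∈ Finset.range (NN k), aa k j • xx k (j+1) := ⟨_, fun k => rfl⟩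
    have hratk : ∀ k, (2:ℝ)^k * ‖v k‖ < ‖u k‖ ∨ (2:ℝ)^k * ‖u k‖ < ‖v k‖ := by
      intro k
      rw [hudef, hvdef, hxxdef, haadef, hNNdef]
      exact hrat k (Ms k)
    obtain ⟨p, hp0, hpS⟩ : ∃ p : ℕ → ℕ, p 0 = 0 ∧ ∀ k, p (k+1) = p k + (NN k + 1) :=
      ⟨fun k => ∑ j ∈ Finset.range k, (NN j + 1), rfl, fun k => Finset.sum_range_succ _ k⟩
    have hpmono : StrictMono p := strictMono_nat_of_lt_succ (fun k => by rw [hpS]; omega)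
    obtain ⟨kk, hkk1, hkk2⟩ : ∃ kk : ℕ → ℕ, (∀ n, p (kk n) ≤ n) ∧ (∀ n, n < p (kk n + 1)) := by
      refine ⟨fun n => Nat.findGreatest (fun k => p k ≤ n) n, fun n => ?_, fun n => ?_⟩
      · exact Nat.findGreatest_spec (P := fun k => p k ≤ n) (Nat.zero_le n)
          (by simp only [hp0]; exact Nat.zero_le n)
      · by_contra hcon
        push_neg at hcon
        have hle : Nat.findGreatest (fun k => p k ≤ n) n + 1 ≤ n :=
          le_trans hpmono.le_apply hcon
        exact (Nat.findGreatest_is_greatest (Nat.lt_succ_self _) hle) hcon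
    have hkk3 : ∀ k n, p k ≤ n → n < p (k+1) → kk n = k := by
      intro k n h1 h2
      rcases lt_trichotomy (kk n) k with h | h | h
      · have h4 : p (kk n + 1) ≤ p k := hpmono.monotone (by omega)
        have := hkk2 n
        omega
      · exact h
      · have h4 : p (k+1) ≤ p (kk n) := hpmono.monotone (by omega)
        have := hkk1 n
        omega
    obtain ⟨ab, hab1, hab2⟩ : ∃ ab : ℕ → ℕ → ℝ,
        (∀ k j, j < NN k → ab k j = aa k j) ∧ (∀ k j, NN k ≤ j → ab k j = 0) :=
      ⟨fun k j => if j < NN k then aa k j else 0,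
        fun k j h => if_pos h, fun k j h => if_neg (by omega)⟩
    obtain ⟨z, hzdef⟩ : ∃ z : ℕ → X, ∀ n, z n = xx (kk n) (n - p (kk n)) := ⟨_, fun n => rfl⟩
    obtain ⟨A, hAdef⟩ : ∃ A : (ℕ → ℝ) → ℕ → ℝ,
        ∀ t n, A t n = t (kk n) * ab (kk n) (n - p (kk n)) := ⟨_, fun t n => rfl⟩
    have hzwin : ∀ k j, j ≤ NN k → z (p k + j) = xx k j := by
      intro k j hj
      have h1 : kk (p k + j) = k := hkk3 k _ (by omega) (by rw [hpS]; omega)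
      rw [hzdef, h1, show p k + j - p k = j from by omega]
    have hAwin : ∀ (t : ℕ → ℝ) (k j : ℕ), j ≤ NN k → A t (p k + j) = t k * ab k j := by
      intro t k j hj
      have h1 : kk (p k + j) = k := hkk3 k _ (by omega) (by rw [hpS]; omega)
      rw [hAdef, h1, show p k + j - p k = j from by omega]
    have hzbl : b.IsBlockSeq z := by
      refine ⟨fun n => ?_, fun n => ?_, fun n i hi j hj => ?_⟩
      · rw [hzdef]; exact (hblk (kk n)).1 _
      · rw [hzdef]; exact (hblk (kk n)).2.1 _
      · have h1 : p (kk n) ≤ n := hkk1 n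
        have h2 : n < p (kk n + 1) := hkk2 n
        rcases lt_or_ge (n+1) (p (kk n + 1)) with hlt | hge
        · have hk2 : kk (n+1) = kk n := hkk3 (kk n) (n+1) (by omega) hlt
          rw [hzdef, hk2] at hj
          rw [hzdef] at hi
          rw [show n + 1 - p (kk n) = (n - p (kk n)) + 1 from by omega] at hj
          exact (hblk (kk n)).2.2 (n - p (kk n)) i hi j hj
        · have hk2 : kk (n+1) = kk n + 1 := by
            refine hkk3 (kk n + 1) (n+1) (by omega) ?_
            rw [hpS (kk n + 1)]
            omega
          rw [hzdef, hk2] at hj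
          rw [show n + 1 - p (kk n + 1) = 0 from by omega] at hj
          rw [hzdef] at hi
          have hnk : n - p (kk n) ≤ NN (kk n) := by have := hpS (kk n); omega
          have hiB := hBfk (kk n) (n - p (kk n)) hnk i hi
          have hjB := hbeyk (kk n + 1) j hj
          rw [hMsS (kk n)] at hjB
          omega
    have ID1 : ∀ (t : ℕ → ℝ) (k N : ℕ), p k ≤ N → N ≤ p (k+1) →
        ∑ n ∈ Finset.Ico (p k) N, A t n • z n
          = ∑ j ∈ Finset.range (N - p k), (t k * ab k j) • xx k j := by
      intro t k N h1 h2
      rw [Finset.sum_Ico_eq_sum_range]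
      refine Finset.sum_congr rfl fun j hj => ?_
      rw [Finset.mem_range] at hj
      have hjle : j ≤ NN k := by have := hpS k; omega
      rw [hzwin k j hjle, hAwin t k j hjle]
    have ID2 : ∀ (t : ℕ → ℝ) (k N : ℕ), p k ≤ N → N ≤ p (k+1) →
        ∑ n ∈ Finset.Ico (p k) N, A t n • z (n+1)
          = ∑ j ∈ Finset.range (N - p k), (t k * ab k j) • xx k (j+1) := by
      intro t k N h1 h2
      rw [Finset.sum_Ico_eq_sum_range]
      refine Finset.sum_congr rfl fun j hj => ?_
      rw [Finset.mem_range] at hj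
      have hjle : j ≤ NN k := by have := hpS k; omega
      rw [hAwin t k j hjle]
      rcases lt_or_ge j (NN k) with hlt | hge
      · have hz2 : z (p k + j + 1) = xx k (j + 1) := hzwin k (j+1) (by omega)
        rw [hz2]
      · rw [hab2 k j hge, mul_zero, zero_smul, zero_smul]
    have FULL1 : ∀ (t : ℕ → ℝ) (k : ℕ),
        ∑ j ∈ Finset.range (NN k), (t k * ab k j) • xx k j = t k • u k := by
      intro t k
      rw [hudef, Finset.smul_sum]
      refine Finset.sum_congr rfl fun j hj => ?_
      rw [Finset.mem_range] at hj
      rw [hab1 k j hj, smul_smul]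
    have FULL1' : ∀ (t : ℕ → ℝ) (k : ℕ),
        ∑ j ∈ Finset.range (NN k + 1), (t k * ab k j) • xx k j = t k • u k := by
      intro t k
      rw [Finset.sum_range_succ, hab2 k (NN k) le_rfl, mul_zero, zero_smul, add_zero]
      exact FULL1 t k
    have FULL2 : ∀ (t : ℕ → ℝ) (k : ℕ),
        ∑ j ∈ Finset.range (NN k), (t k * ab k j) • xx k (j+1) = t k • v k := by
      intro t k
      rw [hvdef, Finset.smul_sum]
      refine Finset.sum_congr rfl fun j hj => ?_
      rw [Finset.mem_range] at hj
      rw [hab1 k j hj, smul_smul]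
    have FULL2' : ∀ (t : ℕ → ℝ) (k : ℕ),
        ∑ j ∈ Finset.range (NN k + 1), (t k * ab k j) • xx k (j+1) = t k • v k := by
      intro t k
      rw [Finset.sum_range_succ, hab2 k (NN k) le_rfl, mul_zero, zero_smul, add_zero]
      exact FULL2 t k
    have NORM1 : ∀ (t : ℕ → ℝ) (k s : ℕ), s ≤ NN k + 1 →
        ‖∑ j ∈ Finset.range s, (t k * ab k j) • xx k j‖ ≤ K * (|t k| * ‖u k‖) := by
      intro t k s hs
      calc ‖∑ j ∈ Finset.range s, (t k * ab k j) • xx k j‖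
          ≤ K * ‖∑ j ∈ Finset.range (NN k + 1), (t k * ab k j) • xx k j‖ :=
            b.block_basic hKb (hblk k) (fun j => t k * ab k j) hs
        _ = K * (|t k| * ‖u k‖) := by rw [FULL1' t k, norm_smul, Real.norm_eq_abs]
    have NORM2 : ∀ (t : ℕ → ℝ) (k s : ℕ), s ≤ NN k + 1 →
        ‖∑ j ∈ Finset.range s, (t k * ab k j) • xx k (j+1)‖ ≤ K * (|t k| * ‖v k‖) := by
      intro t k s hs
      calc ‖∑ j ∈ Finset.range s, (t k * ab k j) • xx k (j+1)‖
          ≤ K * ‖∑ j ∈ Finset.range (NN k + 1), (t k * ab k j) • xx k (j+1)‖ :=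
            b.block_basic hKb ((hblk k).shift b) (fun j => t k * ab k j) hs
        _ = K * (|t k| * ‖v k‖) := by rw [FULL2' t k, norm_smul, Real.norm_eq_abs]
    have hdir : {k : ℕ | (2:ℝ)^k * ‖v k‖ < ‖u k‖}.Infinite ∨
        {k : ℕ | (2:ℝ)^k * ‖u k‖ < ‖v k‖}.Infinite := by
      rw [← Set.infinite_union]
      have huniv : {k : ℕ | (2:ℝ)^k * ‖v k‖ < ‖u k‖} ∪ {k : ℕ | (2:ℝ)^k * ‖u k‖ < ‖v k‖}
          = Set.univ := Set.eq_univ_of_forall fun k => by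
            rcases hratk k with h | h
            · exact Or.inl h
            · exact Or.inr h
      rw [huniv]
      exact Set.infinite_univ
    have hpowpos : ∀ k : ℕ, (0:ℝ) ≤ (2⁻¹:ℝ)^k := fun k => by positivity
    rcases hdir with hS | hS
    · -- ‖u k‖ dominates infinitely often
      obtain ⟨t, htdef⟩ : ∃ t : ℕ → ℝ,
          ∀ k, t k = if (2:ℝ)^k * ‖v k‖ < ‖u k‖ then ‖u k‖⁻¹ else 0 := ⟨_, fun _ => rfl⟩
      have htv : ∀ k, |t k| * ‖v k‖ ≤ (2⁻¹:ℝ)^k := by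
        intro k
        rw [htdef k]
        by_cases h : (2:ℝ)^k * ‖v k‖ < ‖u k‖
        · rw [if_pos h]
          have hu0 : (0:ℝ) < ‖u k‖ := lt_of_le_of_lt (by positivity) h
          rw [abs_of_nonneg (inv_nonneg.mpr hu0.le), inv_mul_le_iff₀ hu0]
          have hpow : (2⁻¹:ℝ)^k * (2:ℝ)^k = 1 := by rw [← mul_pow]; norm_num
          calc ‖v k‖ = (2⁻¹:ℝ)^k * ((2:ℝ)^k * ‖v k‖) := by rw [← mul_assoc, hpow, one_mul]
            _ ≤ (2⁻¹:ℝ)^k * ‖u k‖ := mul_le_mul_of_nonneg_left h.le (hpowpos k)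
            _ = ‖u k‖ * (2⁻¹:ℝ)^k := mul_comm _ _
        · rw [if_neg h, abs_zero, zero_mul]
          exact hpowpos k
      have hseg : ∀ (k N : ℕ), p k ≤ N → N ≤ p (k+1) →
          ‖∑ n ∈ Finset.Ico (p k) N, A t n • z (n+1)‖ ≤ K * (2⁻¹:ℝ)^k := by
        intro k N h1 h2
        rw [ID2 t k N h1 h2]
        refine le_trans (NORM2 t k (N - p k) (by have := hpS k; omega)) ?_
        exact mul_le_mul_of_nonneg_left (htv k) (by linarith)
      have hconv : Converges (fun n => A t n • z (n+1)) :=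
        cauchySeq_tendsto_of_complete (cauchy_of_window_bounds hpmono hp0 (by linarith) hseg)
      have hdiv : ¬ Converges (fun n => A t n • z n) := by
        apply not_converges_of_big_segments
        intro K0
        obtain ⟨k, hkS, hkgt⟩ := hS.exists_gt K0
        have hkS' : (2:ℝ)^k * ‖v k‖ < ‖u k‖ := hkS
        refine ⟨p k, p k + NN k, le_trans hkgt.le hpmono.le_apply, by omega, ?_⟩
        have e1 := ID1 t k (p k + NN k) (by omega) (by rw [hpS]; omega)
        rw [show p k + NN k - p k = NN k from by omega] at e1
        rw [e1, FULL1 t k, norm_smul, Real.norm_eq_abs, htdef k, if_pos hkS']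
        have hu0 : (0:ℝ) < ‖u k‖ := lt_of_le_of_lt (by positivity) hkS'
        rw [abs_of_nonneg (inv_nonneg.mpr hu0.le), inv_mul_cancel₀ hu0.ne']
      exact hdiv ((hshift z hzbl (A t)).mpr hconv)
    · -- ‖v k‖ dominates infinitely often
      obtain ⟨t, htdef⟩ : ∃ t : ℕ → ℝ,
          ∀ k, t k = if (2:ℝ)^k * ‖u k‖ < ‖v k‖ then ‖v k‖⁻¹ else 0 := ⟨_, fun _ => rfl⟩
      have htu : ∀ k, |t k| * ‖u k‖ ≤ (2⁻¹:ℝ)^k := by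
        intro k
        rw [htdef k]
        by_cases h : (2:ℝ)^k * ‖u k‖ < ‖v k‖
        · rw [if_pos h]
          have hv0 : (0:ℝ) < ‖v k‖ := lt_of_le_of_lt (by positivity) h
          rw [abs_of_nonneg (inv_nonneg.mpr hv0.le), inv_mul_le_iff₀ hv0]
          have hpow : (2⁻¹:ℝ)^k * (2:ℝ)^k = 1 := by rw [← mul_pow]; norm_num
          calc ‖u k‖ = (2⁻¹:ℝ)^k * ((2:ℝ)^k * ‖u k‖) := by rw [← mul_assoc, hpow, one_mul]
            _ ≤ (2⁻¹:ℝ)^k * ‖v k‖ := mul_le_mul_of_nonneg_left h.le (hpowpos k)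
            _ = ‖v k‖ * (2⁻¹:ℝ)^k := mul_comm _ _
        · rw [if_neg h, abs_zero, zero_mul]
          exact hpowpos k
      have hseg : ∀ (k N : ℕ), p k ≤ N → N ≤ p (k+1) →
          ‖∑ n ∈ Finset.Ico (p k) N, A t n • z n‖ ≤ K * (2⁻¹:ℝ)^k := by
        intro k N h1 h2
        rw [ID1 t k N h1 h2]
        refine le_trans (NORM1 t k (N - p k) (by have := hpS k; omega)) ?_
        exact mul_le_mul_of_nonneg_left (htu k) (by linarith)
      have hconv : Converges (fun n => A t n • z n) :=
        cauchySeq_tendsto_of_complete (cauchy_of_window_bounds hpmono hp0 (by linarith) hseg)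
      have hdiv : ¬ Converges (fun n => A t n • z (n+1)) := by
        apply not_converges_of_big_segments
        intro K0
        obtain ⟨k, hkS, hkgt⟩ := hS.exists_gt K0
        have hkS' : (2:ℝ)^k * ‖u k‖ < ‖v k‖ := hkS
        refine ⟨p k, p k + NN k, le_trans hkgt.le hpmono.le_apply, by omega, ?_⟩
        have e1 := ID2 t k (p k + NN k) (by omega) (by rw [hpS]; omega)
        rw [show p k + NN k - p k = NN k from by omega] at e1
        rw [e1, FULL2 t k, norm_smul, Real.norm_eq_abs, htdef k, if_pos hkS']
        have hv0 : (0:ℝ) < ‖v k‖ := lt_of_le_of_lt (by positivity) hkS'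
        rw [abs_of_nonneg (inv_nonneg.mpr hv0.le), inv_mul_cancel₀ hv0.ne']
      exact hdiv ((hshift z hzbl (A t)).mp hconv)
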